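/- Let ⟨C_α : α < ω₁⟩ be a C-sequence with associated lower trace L. For all ξ, δ with 0 < ξ < δ < ω₁, min L(ξ,δ) = max(C_δ ∩ ξ). Consequently, for every limit ordinal δ < ω₁, min L(ξ,δ) tends to δ as ξ tends to δ: for every γ < δ there is γ̄ < δ such that γ < min L(ξ,δ) whenever γ̄ < ξ < δ. -/

import Mathlib

/-- The first uncountable ordinal. -/
noncomputable def omega1 : Ordinal := (Cardinal.aleph 1).ord

/-- **Fact (Moore).** Let `⟨C_α : α < ω₁⟩` be a C-sequence with associated lower
trace `L`.  For all `0 < ξ < δ < ω₁` we have `min L(ξ,δ) = max (C_δ ∩ ξ)`.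
Consequently, for every limit ordinal `δ < ω₁`, `min L(ξ,δ)` tends to `δ` as
`ξ → δ`. -/
theorem statement6
    (C : Ordinal → Set Ordinal)
    (hC : ∀ β : Ordinal, 0 < β → β < omega1 →
      C β ⊆ Set.Iio β ∧ (0 : Ordinal) ∈ C β ∧
      (∀ γ < β, ∃ x ∈ C β, γ ≤ x) ∧ (∀ γ < β, (C β ∩ Set.Iio γ).Finite))
    (L : Ordinal → Ordinal → Set Ordinal)
    (hL0 : ∀ α : Ordinal, L α α = ∅)
    (hLrec : ∀ α β : Ordinal, 0 < α → α < β → β < omega1 →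
      L α β = insert (sSup (C β ∩ Set.Iio α))
        {ξ ∈ L α (sInf (C β \ Set.Iio α)) | sSup (C β ∩ Set.Iio α) < ξ}) :
    (∀ ξ δ : Ordinal, 0 < ξ → ξ < δ → δ < omega1 →
        sInf (L ξ δ) = sSup (C δ ∩ Set.Iio ξ)) ∧
    (∀ δ < omega1, Order.IsSuccLimit δ → ∀ γ < δ, ∃ γbar < δ,
        ∀ ξ : Ordinal, γbar < ξ → ξ < δ → γ < sInf (L ξ δ)) := by
  have main : ∀ ξ δ : Ordinal, 0 < ξ → ξ < δ → δ < omega1 →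
      sInf (L ξ δ) = sSup (C δ ∩ Set.Iio ξ) := by
    intro ξ δ hξ hξδ hδ
    rw [hLrec ξ δ hξ hξδ hδ]
    apply le_antisymm
    · exact csInf_le (OrderBot.bddBelow _) (Set.mem_insert _ _)
    · refine le_csInf ⟨_, Set.mem_insert _ _⟩ ?_
      rintro b (rfl | ⟨-, hb⟩)
      · exact le_rfl
      · exact hb.le
  refine ⟨main, ?_⟩
  intro δ hδ hlim γ hγ
  have hδ0 : 0 < δ := hlim.pos
  obtain ⟨hsub, -, hcof, -⟩ := hC δ hδ0 hδ
  obtain ⟨x, hx, hγx⟩ := hcof (γ + 1) (hlim.succ_lt hγ)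
  refine ⟨x, hsub hx, ?_⟩
  intro ξ hxξ hξδ
  have hξ0 : 0 < ξ := (zero_le (a := x)).trans_lt hxξ
  rw [main ξ δ hξ0 hξδ hδ]
  have hbdd : BddAbove (C δ ∩ Set.Iio ξ) := ⟨δ, fun y hy => (hsub hy.1).le⟩
  have : x ≤ sSup (C δ ∩ Set.Iio ξ) := le_csSup hbdd ⟨hx, hxξ⟩
  exact lt_of_lt_of_le (lt_of_lt_of_le (Order.lt_succ γ) hγx) this
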